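/- Let A_1, …, A_k be pairwise commuting N×N matrices with nonnegative integer entries forming an irreducible family, with every row sum of every A_i at least 2 and with A = A_1⋯A_k irreducible; let x be the unimodular Perron–Frobenius eigenvector and let M be the Borel probability measure on X_B determined by the cylinder formula. Then in L²(X_B, M): 𝒱_0 = E_{−1} ⊕ E_0 (an orthogonal direct sum), and for every n ∈ ℕ, 𝒲_n equals the linear span of the union of the subspaces E_γ over all γ ∈ FB with nk ≤ |γ| ≤ (n+1)k − 1. -/

import Mathlib

open scoped Classical ENNReal Topology
open TopologicalSpace MeasureTheory Filter Set
open Fin.NatCast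

namespace KBratteli

variable (k N : ℕ) [NeZero k] (A : Fin k → Matrix (Fin N) (Fin N) ℕ)

/-- An edge at level `n` of the stationary `k`-Bratteli diagram of the matrices
`A 0, …, A (k-1)`: an element of `Edge k N A n` is an edge whose source lies in the
level-`(n+1)` vertex set and whose range lies in the level-`n` vertex set (both copies of
`Fin N`); there are exactly `A (n % k) p q` edges with range `p` and source `q`. -/
structure Edge (n : ℕ) : Type where
  rg : Fin N
  src : Fin N
  idx : Fin (A (n : Fin k) rg src)

/-- The infinite path space `X_B` of the stationary `k`-Bratteli diagram of `A`. -/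
def PathSpace : Type :=
  { x : (n : ℕ) → Edge k N A n // ∀ n, (x n).src = (x (n + 1)).rg }

/-- A finite path of length `ℓ` beginning at level `0`: a composable string of edges,
together with the vertices it visits.  Length-`0` paths are vertices of `V₀`. -/
structure FinPath (ℓ : ℕ) : Type where
  vtx : Fin (ℓ + 1) → Fin N
  edge : (i : Fin ℓ) → Edge k N A i
  rg_eq : ∀ i : Fin ℓ, (edge i).rg = vtx i.castSucc
  src_eq : ∀ i : Fin ℓ, (edge i).src = vtx i.succ

/-- `FB`: the set of all finite paths (of all lengths) beginning at level `0`. -/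
abbrev FB : Type := Σ ℓ : ℕ, FinPath k N A ℓ

variable {k N A}

/-- The source (final) vertex of a finite path. -/
def FinPath.src {ℓ : ℕ} (lam : FinPath k N A ℓ) : Fin N := lam.vtx (Fin.last ℓ)

/-- The range (initial, level-0) vertex of a finite path. -/
def FinPath.rg {ℓ : ℕ} (lam : FinPath k N A ℓ) : Fin N := lam.vtx 0

/-- The length-0 finite path at the level-0 vertex `v`. -/
def vertexPath (v : Fin N) : FinPath k N A 0 where
  vtx := fun _ => v
  edge := fun i => i.elim0
  rg_eq := fun i => i.elim0
  src_eq := fun i => i.elim0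

/-- The cylinder set `[λ]` of a finite path `λ`: all infinite paths with initial
segment `λ`. -/
def Cyl {ℓ : ℕ} (lam : FinPath k N A ℓ) : Set (PathSpace k N A) :=
  { x | (x.1 0).rg = lam.rg ∧ ∀ i : Fin ℓ, x.1 i = lam.edge i }

variable (k N A) in
/-- The collection of all cylinder sets. -/
def cylinderSets : Set (Set (PathSpace k N A)) :=
  { S | ∃ (ℓ : ℕ) (lam : FinPath k N A ℓ), S = Cyl lam }

/-- The cylinder-set topology on the infinite path space. -/
instance : TopologicalSpace (PathSpace k N A) :=
  generateFrom (cylinderSets k N A)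

/-- The Borel σ-algebra of the cylinder-set topology. -/
instance : MeasurableSpace (PathSpace k N A) := borel _

instance : BorelSpace (PathSpace k N A) := ⟨rfl⟩

lemma isOpen_cyl {ℓ : ℕ} (lam : FinPath k N A ℓ) : IsOpen (Cyl lam) :=
  isOpen_generateFrom_of_mem ⟨ℓ, lam, rfl⟩

lemma measurableSet_cyl {ℓ : ℕ} (lam : FinPath k N A ℓ) : MeasurableSet (Cyl lam) :=
  (isOpen_cyl lam).measurableSet

/-- Edges form a finite type. -/
def edgeEquiv (n : ℕ) : Edge k N A n ≃ Σ p : Fin N, Σ q : Fin N, Fin (A (n : Fin k) p q) where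
  toFun e := ⟨e.rg, e.src, e.idx⟩
  invFun t := ⟨t.1, t.2.1, t.2.2⟩
  left_inv e := rfl
  right_inv t := rfl

instance (n : ℕ) : Finite (Edge k N A n) :=
  @Finite.of_equiv _ _ (@Finite.instSigma _ _ _ fun _ => Finite.instSigma) (edgeEquiv n).symm

instance (ℓ : ℕ) : Finite (FinPath k N A ℓ) := by
  have hinj : Function.Injective
      (fun lam : FinPath k N A ℓ => (lam.vtx, lam.edge)) := by
    rintro ⟨v, e, h1, h2⟩ ⟨v', e', h1', h2'⟩ h
    simp only [Prod.mk.injEq] at h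
    obtain ⟨hv, he⟩ := h
    subst hv; subst he; rfl
  exact Finite.of_injective _ hinj

instance : Countable (FB k N A) := by infer_instance

/-- The initial segment of length `m` of an infinite path. -/
def prefixPath (x : PathSpace k N A) (m : ℕ) : FinPath k N A m where
  vtx := fun i => (x.1 i).rg
  edge := fun i => x.1 i
  rg_eq := fun _ => rfl
  src_eq := fun i => x.2 i

lemma mem_cyl_prefixPath (x : PathSpace k N A) (m : ℕ) : x ∈ Cyl (prefixPath x m) :=
  ⟨rfl, fun _ => rfl⟩

lemma measurableSet_coord (j : ℕ) (P : Edge k N A j → Prop) :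
    MeasurableSet { x : PathSpace k N A | P (x.1 j) } := by
  have h : { x : PathSpace k N A | P (x.1 j) }
      = ⋃ (lam : FinPath k N A (j + 1)) (_ : P (lam.edge (Fin.last j))), Cyl lam := by
    ext x
    simp only [Set.mem_setOf_eq, Set.mem_iUnion]
    constructor
    · intro hx
      exact ⟨prefixPath x (j + 1), hx, mem_cyl_prefixPath x (j + 1)⟩
    · rintro ⟨lam, hP, -, hedge⟩
      have hx : x.1 j = lam.edge (Fin.last j) := hedge (Fin.last j)
      rw [hx]; exact hP
  rw [h]
  exact MeasurableSet.iUnion fun lam => MeasurableSet.iUnion fun _ => measurableSet_cyl lam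

/-- The first level at which two infinite paths differ. -/
noncomputable def firstDiff (x y : PathSpace k N A) : ℕ := sInf { n | x.1 n ≠ y.1 n }

/-- The function `d_w` associated to a weight-type function `w` on finite paths:
`d_w(x,x) = 0`; `d_w(x,y) = 1` if `x` and `y` have no common initial sub-path (i.e. they
do not even start at the same level-0 vertex); and otherwise `d_w(x,y) = w(x ∧ y)`, the
value of `w` on the longest common initial sub-path of `x` and `y`. -/
noncomputable def distW (w : FB k N A → ℝ) (x y : PathSpace k N A) : ℝ :=
  if x = y then 0
  else if (x.1 0).rg = (y.1 0).rg then w ⟨firstDiff x y, prefixPath x (firstDiff x y)⟩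
  else 1

/-- `η` is an (initial) sub-path of `λ`. -/
def IsSubPath {m ℓ : ℕ} (η : FinPath k N A m) (lam : FinPath k N A ℓ) : Prop :=
  ∃ h : m ≤ ℓ, η.rg = lam.rg ∧ ∀ i : Fin m, η.edge i = lam.edge (Fin.castLE h i)

/-- `lam ∈ F_γ B` : the finite path `lam` extends `γ`. -/
def Extends {m : ℕ} (γ : FinPath k N A m) (lam : FB k N A) : Prop :=
  IsSubPath γ lam.2

/-- The spectral radius of a matrix of nonnegative integers, as a real number. -/
noncomputable def specRad {N : ℕ} (M : Matrix (Fin N) (Fin N) ℕ) : ℝ :=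
  (spectralRadius ℂ (M.map (Nat.cast : ℕ → ℂ))).toReal

/-- The weight `w_δ` on the stationary `k`-Bratteli diagram of `A`, relative to data
`ρ : Fin k → ℝ` (the spectral radii) and `xv : Fin N → ℝ` (the Perron–Frobenius
eigenvector): on a path `η` of length `q·k + t` (`0 ≤ t ≤ k-1`) it is
`(ρ₁^{q+1} ⋯ ρ_t^{q+1} · ρ_{t+1}^q ⋯ ρ_k^q)^{-1/δ} · xv (s η)`. -/
noncomputable def wt (δ : ℝ) (ρ : Fin k → ℝ) (xv : Fin N → ℝ) (lam : FB k N A) : ℝ :=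
  (∏ i : Fin k, ρ i ^ (if (i : ℕ) < lam.1 % k then lam.1 / k + 1 else lam.1 / k))
      ^ (-(1 / δ)) * xv lam.2.src

/-- The value `M([λ]) = (ρ₁⋯ρ_t)^{-(q+1)} (ρ_{t+1}⋯ρ_k)^{-q} · x_{s(λ)}` of the
measure `M` on the cylinder set of a path of length `q·k + t`. -/
noncomputable def Mval (ρ : Fin k → ℝ) (xv : Fin N → ℝ) (lam : FB k N A) : ℝ :=
  (∏ i : Fin k, ρ i ^ (if (i : ℕ) < lam.1 % k then lam.1 / k + 1 else lam.1 / k))⁻¹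
    * xv lam.2.src

/-- A family of matrices is irreducible if for every pair of indices some finite product
of matrices from the family has positive corresponding entry. -/
def IrreducibleFamily {k N : ℕ} (A : Fin k → Matrix (Fin N) (Fin N) ℕ) : Prop :=
  ∀ a b : Fin N, ∃ l : List (Fin k), 0 < (l.map A).prod a b

/-- A single square matrix with nonnegative integer entries is irreducible if for every
pair of indices some positive power has positive corresponding entry. -/
def MatIrreducible {N : ℕ} (B : Matrix (Fin N) (Fin N) ℕ) : Prop :=
  ∀ a b : Fin N, ∃ m : ℕ, 0 < m ∧ 0 < (B ^ m) a b

/-- The diameter (in `ℝ≥0∞`) of a set of infinite paths relative to `d_w`. -/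
noncomputable def diamW (w : FB k N A → ℝ) (U : Set (PathSpace k N A)) : ℝ≥0∞ :=
  ⨆ (x) (_ : x ∈ U) (y) (_ : y ∈ U), ENNReal.ofReal (distW w x y)

/-- The `t`-dimensional Hausdorff (outer) measure of a set `Z` relative to the metric
`d_w`: `H^t(Z) = lim_{ε → 0} inf { Σᵢ (diam Uᵢ)^t : Z ⊆ ⋃ᵢ Uᵢ, diam Uᵢ < ε }`. -/
noncomputable def hausW (w : FB k N A → ℝ) (t : ℝ) (Z : Set (PathSpace k N A)) : ℝ≥0∞ :=
  ⨆ (ε : ℝ≥0∞) (_ : 0 < ε),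
    ⨅ (U : ℕ → Set (PathSpace k N A)) (_ : Z ⊆ ⋃ n, U n)
      (_ : ∀ n, diamW w (U n) < ε), ∑' n, diamW w (U n) ^ t

lemma natCast_mul_add (n i : ℕ) : ((n * k + i : ℕ) : Fin k) = (i : Fin k) := by
  push_cast
  simp [Fin.natCast_self]

/-- Transport of edges between levels governed by the same matrix (the diagram is
stationary with period `k`). -/
def Edge.cast {i j : ℕ} (h : (i : Fin k) = (j : Fin k)) (e : Edge k N A i) :
    Edge k N A j where
  rg := e.rg
  src := e.src
  idx := Fin.cast (by rw [h]) e.idx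

/-- The cylinder set `[γ e]` of a finite path `γ` (of length `m`) extended by one
further edge `e` at level `m`. -/
def cylExt {m : ℕ} (γ : FinPath k N A m) (e : Edge k N A m) : Set (PathSpace k N A) :=
  Cyl γ ∩ { x | x.1 m = e }

lemma measurableSet_cylExt {m : ℕ} (γ : FinPath k N A m) (e : Edge k N A m) :
    MeasurableSet (cylExt γ e) :=
  (measurableSet_cyl γ).inter (measurableSet_coord m fun f => f = e)

/-- The cylinder set `[λ μ]` of the concatenation of `λ ∈ F^{nk}B` with `μ ∈ F^{k}B`
(the diagram being stationary of period `k`, `μ` concatenates onto `λ`). -/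
def cylCat {n : ℕ} (lam : FinPath k N A (n * k)) (η : FinPath k N A k) :
    Set (PathSpace k N A) :=
  Cyl lam ∩ { x | (x.1 (n * k)).rg = η.rg } ∩
    ⋂ i : Fin k,
      { x | x.1 (n * k + (i : ℕ)) = Edge.cast (natCast_mul_add n (i : ℕ)).symm (η.edge i) }

lemma measurableSet_cylCat {n : ℕ} (lam : FinPath k N A (n * k)) (η : FinPath k N A k) :
    MeasurableSet (cylCat lam η) :=
  ((measurableSet_cyl lam).inter
      (measurableSet_coord (n * k) (fun e => e.rg = η.rg))).inter
    (MeasurableSet.iInter fun i => measurableSet_coord (n * k + (i : ℕ))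
      (fun e => e = Edge.cast (natCast_mul_add n (i : ℕ)).symm (η.edge i)))



end KBratteli

namespace KBratteli

variable {k N : ℕ} [NeZero k] {A : Fin k → Matrix (Fin N) (Fin N) ℕ}

section L2

variable (M : MeasureTheory.Measure (PathSpace k N A)) [MeasureTheory.IsFiniteMeasure M]

/-- The indicator function `χ_{[λ]}` of a cylinder set, as an element of `L²(X_B, M)`. -/
noncomputable def chi {ℓ : ℕ} (lam : FinPath k N A ℓ) : Lp ℂ 2 M :=
  indicatorConstLp 2 (measurableSet_cyl lam) (measure_ne_top M _) (1 : ℂ)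

/-- The indicator function `χ_{[γ e]}` of the cylinder of a path `γ` extended by one
further edge `e`, as an element of `L²(X_B, M)`. -/
noncomputable def chiE {m : ℕ} (γ : FinPath k N A m) (e : Edge k N A m) : Lp ℂ 2 M :=
  indicatorConstLp 2 (measurableSet_cylExt γ e) (measure_ne_top M _) (1 : ℂ)

/-- The indicator function `χ_{[λ μ]}` of the cylinder of the concatenation of
`λ ∈ F^{nk}B` and `μ ∈ F^{k}B`, as an element of `L²(X_B, M)`. -/
noncomputable def chiC {n : ℕ} (lam : FinPath k N A (n * k)) (η : FinPath k N A k) :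
    Lp ℂ 2 M :=
  indicatorConstLp 2 (measurableSet_cylCat lam η) (measure_ne_top M _) (1 : ℂ)

/-- The constant function `1` in `L²(X_B, M)`. -/
noncomputable def oneL2 : Lp ℂ 2 M :=
  indicatorConstLp 2 MeasurableSet.univ (measure_ne_top M _) (1 : ℂ)

/-- `Ṽ_m`, the linear span in `L²(X_B, M)` of the indicators of cylinders of paths of
length `m`. -/
noncomputable def Vt (m : ℕ) : Submodule ℂ (Lp ℂ 2 M) :=
  Submodule.span ℂ (Set.range fun lam : FinPath k N A m => chi M lam)

/-- `𝒲_n = 𝒱_{n+1} ⊓ 𝒱_n^⊥` where `𝒱_n = Ṽ_{nk}`. -/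
noncomputable def Wn (n : ℕ) : Submodule ℂ (Lp ℂ 2 M) :=
  Vt M ((n + 1) * k) ⊓ (Vt M (n * k))ᗮ

/-- `E_{-1}`: the subspace of constant functions. -/
noncomputable def Eneg : Submodule ℂ (Lp ℂ 2 M) :=
  Submodule.span ℂ {oneL2 M}

/-- `E_0 = span{ M([v])⁻¹ χ_{[v]} − M([v'])⁻¹ χ_{[v']} : v ≠ v' ∈ V₀ }`. -/
noncomputable def Ezero : Submodule ℂ (Lp ℂ 2 M) :=
  Submodule.span ℂ
    { f | ∃ v v' : Fin N, v ≠ v' ∧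
        f = (((M (Cyl (vertexPath v))).toReal : ℂ))⁻¹ • chi M (vertexPath v)
            - (((M (Cyl (vertexPath v'))).toReal : ℂ))⁻¹ • chi M (vertexPath v') }

/-- `E_γ = span{ M([γe])⁻¹ χ_{[γe]} − M([γe'])⁻¹ χ_{[γe']} }` over distinct edges
`e ≠ e'` with range `s(γ)`. -/
noncomputable def Esub {m : ℕ} (γ : FinPath k N A m) : Submodule ℂ (Lp ℂ 2 M) :=
  Submodule.span ℂ
    { f | ∃ e e' : Edge k N A m, e ≠ e' ∧ e.rg = γ.src ∧ e'.rg = γ.src ∧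
        f = (((M (cylExt γ e)).toReal : ℂ))⁻¹ • chiE M γ e
            - (((M (cylExt γ e')).toReal : ℂ))⁻¹ • chiE M γ e' }

noncomputable instance (m : ℕ) : FiniteDimensional ℂ (Vt M m) :=
  FiniteDimensional.span_of_finite ℂ (Set.finite_range _)

noncomputable instance : FiniteDimensional ℂ (Eneg M) :=
  FiniteDimensional.span_of_finite ℂ (Set.finite_singleton _)

/-- `Ξ_q`: the orthogonal projection of `L²(X_B, M)` onto `R_q = Ṽ_{qk}`. -/
noncomputable def Xi (q : ℕ) : Lp ℂ 2 M →L[ℂ] Lp ℂ 2 M :=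
  (Vt M (q * k)).subtypeL.comp ((Vt M (q * k)).orthogonalProjectionOnto)

/-- `Ξ_{-1}`: the orthogonal projection onto the constants `R_{-1}`. -/
noncomputable def XiNeg : Lp ℂ 2 M →L[ℂ] Lp ℂ 2 M :=
  (Eneg M).subtypeL.comp ((Eneg M).orthogonalProjectionOnto)

/-- `P_q = Ξ_q − Ξ_{q-1}` (with `Ξ_{-1}` the projection onto the constants). -/
noncomputable def Pq : ℕ → (Lp ℂ 2 M →L[ℂ] Lp ℂ 2 M)
  | 0 => Xi M 0 - XiNeg M
  | (q + 1) => Xi M (q + 1) - Xi M q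


/-- `R_{q-1}` for `q ∈ ℕ`, with the convention `R_{-1} = ` constants. -/
noncomputable def Rprev : ℕ → Submodule ℂ (Lp ℂ 2 M)
  | 0 => Eneg M
  | (q + 1) => Vt M (q * k)

/-- The domain of the Dirac operator `D`. -/
noncomputable def domD (α : ℕ → ℝ) : Set (Lp ℂ 2 M) :=
  { f | Summable fun q : ℕ => α q ^ 2 * ‖Pq M q f‖ ^ 2 }

/-- The Dirac operator `D f = Σ_q α_q P_q f`. -/
noncomputable def opD (α : ℕ → ℝ) (f : Lp ℂ 2 M) : Lp ℂ 2 M :=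
  ∑' q : ℕ, ((α q : ℂ)) • Pq M q f

end L2

end KBratteli

namespace KBratteli


end KBratteli

set_option linter.unusedSectionVars false

namespace KBratteli


variable {k N : ℕ} [NeZero k] {A : Fin k → Matrix (Fin N) (Fin N) ℕ}

lemma FinPath.ext_of {ℓ : ℕ} {γ γ' : FinPath k N A ℓ} (h0 : γ.rg = γ'.rg)
    (he : ∀ i, γ.edge i = γ'.edge i) : γ = γ' := by
  obtain ⟨v, e, h1, h2⟩ := γ; obtain ⟨v', e', h1', h2'⟩ := γ'
  have hv : v = v' := by
    funext i
    induction i using Fin.induction with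
    | zero => exact h0
    | succ j _ => rw [← h2 j, ← h2' j]; exact congrArg Edge.src (he j)
  subst hv
  have : e = e' := funext he
  subst this; rfl

lemma prefixPath_eq_of_mem {ℓ : ℕ} {x : PathSpace k N A} {lam : FinPath k N A ℓ}
    (hx : x ∈ Cyl lam) : prefixPath x ℓ = lam :=
  FinPath.ext_of hx.1 hx.2

lemma cyl_disjoint {ℓ : ℕ} {lam μ : FinPath k N A ℓ} (h : lam ≠ μ) :
    Disjoint (Cyl lam) (Cyl μ) := by
  rw [Set.disjoint_left]
  intro x hl hm
  exact h ((prefixPath_eq_of_mem hl).symm.trans (prefixPath_eq_of_mem hm))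

/-- Truncation of a finite path to a shorter length. -/
def truncLE {m ℓ : ℕ} (h : m ≤ ℓ) (lam : FinPath k N A ℓ) : FinPath k N A m where
  vtx i := lam.vtx (Fin.castLE (by omega) i)
  edge i := lam.edge (Fin.castLE h i)
  rg_eq i := (lam.rg_eq (Fin.castLE h i)).trans (congrArg lam.vtx (by ext; simp))
  src_eq i := (lam.src_eq (Fin.castLE h i)).trans (congrArg lam.vtx (by ext; simp))

lemma truncLE_prefixPath {m ℓ : ℕ} (h : m ≤ ℓ) (x : PathSpace k N A) :
    truncLE h (prefixPath x ℓ) = prefixPath x m :=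
  FinPath.ext_of rfl (fun _ => rfl)

lemma cyl_subset_truncLE {m ℓ : ℕ} (h : m ≤ ℓ) (lam : FinPath k N A ℓ) :
    Cyl lam ⊆ Cyl (truncLE h lam) := by
  intro x hx
  refine ⟨hx.1.trans (congrArg lam.vtx (by ext; simp)), fun i => hx.2 (Fin.castLE h i)⟩

lemma cyl_disjoint_of_truncLE_ne {m ℓ : ℕ} (h : m ≤ ℓ) {lam : FinPath k N A ℓ}
    {μ : FinPath k N A m} (hne : truncLE h lam ≠ μ) : Disjoint (Cyl lam) (Cyl μ) := by
  rw [Set.disjoint_left]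
  intro x hl hm
  apply hne
  rw [← prefixPath_eq_of_mem hl, truncLE_prefixPath, prefixPath_eq_of_mem hm]

lemma rg_at_of_mem_cyl {m : ℕ} {x : PathSpace k N A} {γ : FinPath k N A m}
    (hx : x ∈ Cyl γ) : (x.1 m).rg = γ.src := by
  rw [← prefixPath_eq_of_mem hx]; rfl

/-- Extension of a finite path by one edge. -/
def FinPath.extend {m : ℕ} (γ : FinPath k N A m) (e : Edge k N A m) (he : e.rg = γ.src) :
    FinPath k N A (m + 1) where
  vtx := Fin.snoc γ.vtx e.src
  edge := Fin.snoc (α := fun i : Fin (m+1) => Edge k N A i) γ.edge e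
  rg_eq := by
    intro i
    induction i using Fin.lastCases with
    | last => simpa [Fin.snoc_last, Fin.snoc_castSucc, FinPath.src] using he
    | cast j => simpa [Fin.snoc_castSucc] using γ.rg_eq j
  src_eq := by
    intro i
    induction i using Fin.lastCases with
    | last => simp [Fin.snoc_last]
    | cast j => simpa only [Fin.succ_castSucc, Fin.snoc_castSucc] using γ.src_eq j

lemma extend_rg {m : ℕ} (γ : FinPath k N A m) (e : Edge k N A m) (he : e.rg = γ.src) :
    (γ.extend e he).rg = γ.rg := by
  show (Fin.snoc γ.vtx e.src : Fin (m+2) → Fin N) 0 = γ.vtx 0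
  rw [← Fin.castSucc_zero, Fin.snoc_castSucc]

lemma extend_edge_castSucc {m : ℕ} (γ : FinPath k N A m) (e : Edge k N A m)
    (he : e.rg = γ.src) (j : Fin m) :
    (γ.extend e he).edge j.castSucc = γ.edge j := by
  show Fin.snoc (α := fun i : Fin (m+1) => Edge k N A i) γ.edge e j.castSucc = γ.edge j
  rw [Fin.snoc_castSucc]

lemma extend_edge_last {m : ℕ} (γ : FinPath k N A m) (e : Edge k N A m)
    (he : e.rg = γ.src) :
    (γ.extend e he).edge (Fin.last m) = e := by
  show Fin.snoc (α := fun i : Fin (m+1) => Edge k N A i) γ.edge e (Fin.last m) = e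
  rw [Fin.snoc_last]

lemma cyl_extend {m : ℕ} (γ : FinPath k N A m) (e : Edge k N A m) (he : e.rg = γ.src) :
    Cyl (γ.extend e he) = cylExt γ e := by
  ext x
  simp only [Cyl, cylExt, Set.mem_setOf_eq, Set.mem_inter_iff]
  constructor
  · rintro ⟨h0, hi⟩
    refine ⟨⟨h0.trans (extend_rg γ e he), fun i => ?_⟩, ?_⟩
    · exact (hi i.castSucc).trans (extend_edge_castSucc γ e he i)
    · exact (hi (Fin.last m)).trans (extend_edge_last γ e he)
  · rintro ⟨⟨h0, hi⟩, hm⟩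
    refine ⟨h0.trans (extend_rg γ e he).symm, fun i => ?_⟩
    induction i using Fin.lastCases with
    | last => exact hm.trans (extend_edge_last γ e he).symm
    | cast j => exact (hi j).trans (extend_edge_castSucc γ e he j).symm

lemma cyl_eq_cylExt_trunc {m : ℕ} (lam : FinPath k N A (m + 1)) :
    Cyl lam = cylExt (truncLE (Nat.le_succ m) lam) (lam.edge (Fin.last m)) := by
  ext x
  simp only [Cyl, cylExt, Set.mem_setOf_eq, Set.mem_inter_iff]
  constructor
  · rintro ⟨h0, hi⟩
    refine ⟨⟨h0.trans (congrArg lam.vtx (by ext; simp)), fun i => hi (Fin.castLE (Nat.le_succ m) i)⟩, hi (Fin.last m)⟩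
  · rintro ⟨⟨h0, hi⟩, hm⟩
    refine ⟨h0.trans (congrArg lam.vtx (by ext; simp)), fun i => ?_⟩
    induction i using Fin.lastCases with
    | last => exact hm
    | cast j => exact hi j

lemma cylExt_subset_cyl {m : ℕ} (γ : FinPath k N A m) (e : Edge k N A m) :
    cylExt γ e ⊆ Cyl γ := Set.inter_subset_left

lemma cylExt_disjoint {m : ℕ} (γ : FinPath k N A m) {e e' : Edge k N A m} (h : e ≠ e') :
    Disjoint (cylExt γ e) (cylExt γ e') := by
  rw [Set.disjoint_left]
  rintro x ⟨-, hx⟩ ⟨-, hx'⟩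
  exact h (hx.symm.trans hx')

noncomputable instance (n : ℕ) : Fintype (Edge k N A n) := Fintype.ofFinite _
noncomputable instance (ℓ : ℕ) : Fintype (FinPath k N A ℓ) := Fintype.ofFinite _

/-- The edges that can extend `γ`. -/
noncomputable def extSet {m : ℕ} (γ : FinPath k N A m) : Finset (Edge k N A m) :=
  Finset.univ.filter (fun e => e.rg = γ.src)

lemma cyl_eq_biUnion_cylExt {m : ℕ} (γ : FinPath k N A m) :
    Cyl γ = ⋃ e ∈ extSet γ, cylExt γ e := by
  ext x
  simp only [Set.mem_iUnion, extSet, Finset.mem_filter, Finset.mem_univ, true_and]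
  constructor
  · intro hx
    exact ⟨x.1 m, rg_at_of_mem_cyl hx, hx, rfl⟩
  · rintro ⟨e, -, hx, -⟩
    exact hx

lemma univ_eq_biUnion_cyl0 :
    (Set.univ : Set (PathSpace k N A)) = ⋃ v ∈ (Finset.univ : Finset (Fin N)), Cyl (vertexPath v) := by
  ext x
  simp only [Set.mem_univ, true_iff, Set.mem_iUnion, Finset.mem_univ, exists_true_left, true_and]
  exact ⟨(x.1 0).rg, rfl, fun i => i.elim0⟩

lemma cyl0_disjoint {v v' : Fin N} (h : v ≠ v') :
    Disjoint (Cyl (vertexPath (A := A) v)) (Cyl (vertexPath v')) := by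
  rw [Set.disjoint_left]
  rintro x ⟨hx, -⟩ ⟨hx', -⟩
  exact h (hx.symm.trans hx')

lemma finPath_zero_eq (lam : FinPath k N A 0) : lam = vertexPath (lam.vtx 0) :=
  FinPath.ext_of rfl (fun i => i.elim0)




/-- General congruence for `indicatorConstLp`. -/
lemma indicatorConstLp_congr {α E : Type*} [MeasurableSpace α] {μ : MeasureTheory.Measure α}
    [NormedAddCommGroup E] {p : ℝ≥0∞} {s t : Set α} (h : s = t)
    (hs : MeasurableSet s) (hμs : μ s ≠ ∞) (ht : MeasurableSet t) (hμt : μ t ≠ ∞) (c : E) :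
    indicatorConstLp p hs hμs c = indicatorConstLp p ht hμt c := by
  subst h; rfl

/-- Indicator of a finite disjoint union is the sum of the indicators. -/
lemma indicatorConstLp_biUnion {α E ι : Type*} [MeasurableSpace α]
    {μ : MeasureTheory.Measure α} [NormedAddCommGroup E] {p : ℝ≥0∞}
    (s : Finset ι) (t : ι → Set α) (ht : ∀ i, MeasurableSet (t i))
    (hμ : ∀ i, μ (t i) ≠ ∞)
    (hd : ∀ i ∈ s, ∀ j ∈ s, i ≠ j → Disjoint (t i) (t j))
    (hU : MeasurableSet (⋃ i ∈ s, t i)) (hμU : μ (⋃ i ∈ s, t i) ≠ ∞) (c : E) :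
    indicatorConstLp p hU hμU c = ∑ i ∈ s, indicatorConstLp p (ht i) (hμ i) c := by
  classical
  induction s using Finset.induction_on with
  | empty =>
      rw [Finset.sum_empty]
      rw [indicatorConstLp_congr (show (⋃ i ∈ (∅ : Finset ι), t i) = ∅ by simp) hU hμU
        MeasurableSet.empty (by simp)]
      exact indicatorConstLp_empty
  | @insert a s ha ih =>
      have hU' : MeasurableSet (⋃ i ∈ s, t i) :=
        MeasurableSet.biUnion s.countable_toSet (fun i _ => ht i)
      have hμU' : μ (⋃ i ∈ s, t i) ≠ ∞ := by
        refine (measure_biUnion_lt_top s.finite_toSet (fun i _ => ?_)).ne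
        exact (hμ i).lt_top
      have hdisj : Disjoint (t a) (⋃ i ∈ s, t i) := by
        rw [Set.disjoint_iUnion₂_right]
        intro i hi
        exact hd a (s.mem_insert_self a) i (Finset.mem_insert_of_mem hi)
          (fun h => ha (h ▸ hi))
      rw [indicatorConstLp_congr (show (⋃ i ∈ insert a s, t i) = t a ∪ ⋃ i ∈ s, t i by
            simp [Set.iUnion_or, Set.iUnion_union_distrib]) hU hμU
          ((ht a).union hU') (measure_union_ne_top (hμ a) hμU'),
        indicatorConstLp_disjoint_union (ht a) hU' (hμ a) hμU' hdisj c,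
        Finset.sum_insert ha,
        ih (fun i hi j hj hij => hd i (Finset.mem_insert_of_mem hi) j
          (Finset.mem_insert_of_mem hj) hij) hU' hμU']

/-- Inner product of two indicator functions in `L²`. -/
lemma inner_indic_indic {α : Type*} [MeasurableSpace α] {μ : MeasureTheory.Measure α}
    {s t : Set α} (hs : MeasurableSet s) (ht : MeasurableSet t)
    (hμs : μ s ≠ ∞) (hμt : μ t ≠ ∞) :
    (inner ℂ (indicatorConstLp 2 hs hμs (1 : ℂ)) (indicatorConstLp 2 ht hμt (1 : ℂ)) : ℂ)
      = ((μ (t ∩ s)).toReal : ℂ) := by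
  rw [L2.inner_indicatorConstLp_one hs hμs, setIntegral_indicatorConstLp hs ht hμt]
  simp [Complex.real_smul, measureReal_def]




section Meas

variable (M : MeasureTheory.Measure (PathSpace k N A)) [MeasureTheory.IsFiniteMeasure M]

/-- Abbreviation: positivity of all cylinder measures. -/
def CylPos : Prop := ∀ (ℓ : ℕ) (lam : FinPath k N A ℓ), 0 < (M (Cyl lam)).toReal

variable {M}

lemma cylExt_pos (hpos : CylPos M) {m : ℕ} (γ : FinPath k N A m) {e : Edge k N A m}
    (he : e.rg = γ.src) : 0 < (M (cylExt γ e)).toReal := by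
  rw [← cyl_extend γ e he]
  exact hpos _ _

lemma chiE_eq_chi {m : ℕ} (γ : FinPath k N A m) {e : Edge k N A m} (he : e.rg = γ.src) :
    chiE M γ e = chi M (γ.extend e he) :=
  (indicatorConstLp_congr (cyl_extend γ e he) _ _ _ _ 1).symm

lemma chi_eq_sum_chiE {m : ℕ} (γ : FinPath k N A m) :
    chi M γ = ∑ e ∈ extSet γ, chiE M γ e := by
  refine (indicatorConstLp_congr (cyl_eq_biUnion_cylExt γ) _ _
    (MeasurableSet.biUnion (extSet γ).countable_toSet (fun e _ => measurableSet_cylExt γ e))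
    (measure_ne_top M _) 1).trans ?_
  exact indicatorConstLp_biUnion _ _ (fun e => measurableSet_cylExt γ e)
    (fun e => measure_ne_top M _)
    (fun e _ e' _ hne => cylExt_disjoint γ hne) _ _ 1

lemma oneL2_eq_sum : oneL2 M = ∑ v : Fin N, chi M (vertexPath v) := by
  refine (indicatorConstLp_congr univ_eq_biUnion_cyl0 _ _
    (MeasurableSet.biUnion (Finset.univ : Finset (Fin N)).countable_toSet
      (fun v _ => measurableSet_cyl _)) (measure_ne_top M _) 1).trans ?_
  exact indicatorConstLp_biUnion _ _ (fun v => measurableSet_cyl _)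
    (fun v => measure_ne_top M _)
    (fun v _ v' _ hne => cyl0_disjoint hne) _ _ 1

lemma measure_cyl_eq_sum {m : ℕ} (γ : FinPath k N A m) :
    (M (Cyl γ)).toReal = ∑ e ∈ extSet γ, (M (cylExt γ e)).toReal := by
  rw [cyl_eq_biUnion_cylExt γ,
    measure_biUnion_finset (fun e _ e' _ hne => cylExt_disjoint γ hne)
      (fun e _ => measurableSet_cylExt γ e),
    ENNReal.toReal_sum (fun e _ => measure_ne_top M _)]

lemma measure_univ_eq_sum [MeasureTheory.IsProbabilityMeasure M] :
    (1 : ℝ) = ∑ v : Fin N, (M (Cyl (vertexPath (A := A) v))).toReal := by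
  have h := congrArg (fun s => (M s).toReal) (univ_eq_biUnion_cyl0 (k := k) (N := N) (A := A))
  simp only [measure_univ, ENNReal.toReal_one] at h
  rw [h, measure_biUnion_finset (fun v _ v' _ hne => cyl0_disjoint hne)
      (fun v _ => measurableSet_cyl _),
    ENNReal.toReal_sum (fun v _ => measure_ne_top M _)]

end Meas

section Pos

variable {ρ : Fin k → ℝ} {x : Fin N → ℝ}

lemma rho_pos [NeZero N] {A : Fin k → Matrix (Fin N) (Fin N) ℕ}
    (hrow : ∀ (i : Fin k) (a : Fin N), 2 ≤ ∑ b, A i a b)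
    (hxpos : ∀ v, 0 < x v)
    (hxeig : ∀ i, ((A i).map (Nat.cast : ℕ → ℝ)).mulVec x = ρ i • x) (i : Fin k) :
    0 < ρ i := by
  have hN : 0 < N := Nat.pos_of_ne_zero (NeZero.ne N)
  set a : Fin N := ⟨0, hN⟩
  have hsum : (2 : ℕ) ≤ ∑ b, A i a b := hrow i a
  have hex : ∃ b, A i a b ≠ 0 := by
    by_contra h
    push_neg at h
    simp [h] at hsum
  obtain ⟨b, hb⟩ := hex
  have h1 : (1 : ℝ) ≤ (A i a b : ℝ) := by
    exact_mod_cast Nat.one_le_iff_ne_zero.mpr hb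
  have heq : ρ i * x a = ∑ c, (A i a c : ℝ) * x c := by
    have := congrFun (hxeig i) a
    simp only [Matrix.mulVec, dotProduct, Matrix.map_apply, Pi.smul_apply,
      smul_eq_mul] at this
    rw [← this]
  have hge : x b ≤ ρ i * x a := by
    rw [heq]
    calc x b = 1 * x b := (one_mul _).symm
    _ ≤ (A i a b : ℝ) * x b := by
        apply mul_le_mul_of_nonneg_right h1 (hxpos b).le
    _ ≤ ∑ c, (A i a c : ℝ) * x c := by
        apply Finset.single_le_sum (f := fun c => (A i a c : ℝ) * x c)
          (fun c _ => mul_nonneg (Nat.cast_nonneg _) (hxpos c).le) (Finset.mem_univ b)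
  have hpos : 0 < ρ i * x a := lt_of_lt_of_le (hxpos b) hge
  rcases mul_pos_iff.mp hpos with ⟨h, _⟩ | ⟨_, h⟩
  · exact h
  · exact absurd (hxpos a) (lt_asymm h)

lemma Mval_pos (hρ : ∀ i, 0 < ρ i) (hxpos : ∀ v, 0 < x v) (lam : FB k N A) :
    0 < Mval ρ x lam := by
  apply mul_pos
  · exact inv_pos.2 (Finset.prod_pos (fun i _ => pow_pos (hρ i) _))
  · exact hxpos _

lemma cylPos_of_hM {ρ : Fin k → ℝ} {x : Fin N → ℝ}
    (hρ : ∀ i, 0 < ρ i) (hxpos : ∀ v, 0 < x v)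
    {M : MeasureTheory.Measure (PathSpace k N A)} [MeasureTheory.IsFiniteMeasure M]
    (hM : ∀ lam : FB k N A, M (Cyl lam.2) = ENNReal.ofReal (Mval ρ x lam)) :
    CylPos M := by
  intro ℓ lam
  rw [hM ⟨ℓ, lam⟩, ENNReal.toReal_ofReal (Mval_pos hρ hxpos ⟨ℓ, lam⟩).le]
  exact Mval_pos hρ hxpos ⟨ℓ, lam⟩

end Pos


variable {M : MeasureTheory.Measure (PathSpace k N A)} [MeasureTheory.IsFiniteMeasure M]



lemma mem_orth_span {H : Type*} [NormedAddCommGroup H] [InnerProductSpace ℂ H]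
    {S : Set H} {v : H} (h : ∀ u ∈ S, (inner ℂ u v : ℂ) = 0) :
    v ∈ (Submodule.span ℂ S)ᗮ := by
  rw [Submodule.mem_orthogonal]
  intro u hu
  induction hu using Submodule.span_induction with
  | mem u hu => exact h u hu
  | zero => exact inner_zero_left v
  | add u w _ _ hu hw => rw [inner_add_left, hu, hw, add_zero]
  | smul a u _ hu => rw [inner_smul_left, hu, mul_zero]

lemma inner_chi_sub (hpos : CylPos M) {p m : ℕ} (hpm : p ≤ m)
    (μ : FinPath k N A p) (γ : FinPath k N A m) {e e' : Edge k N A m}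
    (he : e.rg = γ.src) (he' : e'.rg = γ.src) :
    (inner ℂ (chi M μ) ((((M (cylExt γ e)).toReal : ℂ))⁻¹ • chiE M γ e
        - (((M (cylExt γ e')).toReal : ℂ))⁻¹ • chiE M γ e') : ℂ) = 0 := by
  have key : ∀ (f : Edge k N A m), f.rg = γ.src →
      (inner ℂ (chi M μ) ((((M (cylExt γ f)).toReal : ℂ))⁻¹ • chiE M γ f) : ℂ)
        = if truncLE hpm γ = μ then 1 else 0 := by
    intro f hf
    rw [inner_smul_right, chi, chiE, inner_indic_indic]
    by_cases h : truncLE hpm γ = μ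
    · rw [if_pos h]
      have hsub : cylExt γ f ∩ Cyl μ = cylExt γ f :=
        Set.inter_eq_self_of_subset_left
          ((cylExt_subset_cyl γ f).trans (h ▸ cyl_subset_truncLE hpm γ))
      rw [hsub, inv_mul_cancel₀]
      exact_mod_cast (cylExt_pos hpos γ hf).ne'
    · rw [if_neg h]
      have hdis : cylExt γ f ∩ Cyl μ = ∅ :=
        Set.disjoint_iff_inter_eq_empty.mp
          (Set.disjoint_of_subset_left (cylExt_subset_cyl γ f)
            (cyl_disjoint_of_truncLE_ne hpm h))
      rw [hdis]
      simp
  rw [inner_sub_right, key e he, key e' he']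
  simp

lemma esub_le_orth (hpos : CylPos M) {p m : ℕ} (hpm : p ≤ m) (γ : FinPath k N A m) :
    Esub M γ ≤ (Vt M p)ᗮ := by
  rw [Esub, Submodule.span_le]
  rintro f ⟨e, e', hne, he, he', rfl⟩
  apply mem_orth_span
  rintro u ⟨μ, rfl⟩
  exact inner_chi_sub hpos hpm μ γ he he'

lemma esub_le_vt {m : ℕ} (γ : FinPath k N A m) : Esub M γ ≤ Vt M (m + 1) := by
  rw [Esub, Submodule.span_le]
  rintro f ⟨e, e', hne, he, he', rfl⟩
  apply sub_mem
  · apply Submodule.smul_mem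
    rw [chiE_eq_chi γ he]
    exact Submodule.subset_span ⟨_, rfl⟩
  · apply Submodule.smul_mem
    rw [chiE_eq_chi γ he']
    exact Submodule.subset_span ⟨_, rfl⟩

lemma vt_mono_succ {m : ℕ} : Vt M m ≤ Vt M (m + 1) := by
  rw [Vt, Submodule.span_le]
  rintro f ⟨lam, rfl⟩
  beta_reduce
  rw [chi_eq_sum_chiE lam]
  apply Submodule.sum_mem
  intro e he'
  have he : e.rg = lam.src := (Finset.mem_filter.mp he').2
  rw [chiE_eq_chi lam he]
  exact Submodule.subset_span ⟨_, rfl⟩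

lemma vt_mono {m m' : ℕ} (h : m ≤ m') : Vt M m ≤ Vt M m' := by
  induction m', h using Nat.le_induction with
  | base => exact le_rfl
  | succ m' h ih => exact ih.trans vt_mono_succ

lemma mem_extSet_iff {m : ℕ} {γ : FinPath k N A m} {e : Edge k N A m} :
    e ∈ extSet γ ↔ e.rg = γ.src := by
  simp [extSet]

lemma vt_succ_le_sup (hpos : CylPos M) {m : ℕ} {S : Submodule ℂ (Lp ℂ 2 M)}
    (hS : ∀ γ : FinPath k N A m, Esub M γ ≤ S) : Vt M (m + 1) ≤ Vt M m ⊔ S := by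
  rw [Vt, Submodule.span_le]
  rintro ff ⟨lam, rfl⟩
  set γ : FinPath k N A m := truncLE (Nat.le_succ m) lam with hγ
  set e : Edge k N A m := lam.edge (Fin.last m) with he'
  have he : e.rg = γ.src := lam.rg_eq (Fin.last m)
  have hchi : chi M lam = chiE M γ e :=
    indicatorConstLp_congr (cyl_eq_cylExt_trunc lam) _ _ _ _ 1
  set cγ : ℝ := (M (Cyl γ)).toReal with hcγdef
  set c : Edge k N A m → ℝ := fun f => (M (cylExt γ f)).toReal with hcdef
  set g : Edge k N A m → Lp ℂ 2 M := fun f => ((c f : ℂ))⁻¹ • chiE M γ f with hgdef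
  have hcγ0 : cγ ≠ 0 := (hpos m γ).ne'
  have hcγ : ((cγ : ℂ)) ≠ 0 := by exact_mod_cast hcγ0
  have hcf0 : ∀ f ∈ extSet γ, c f ≠ 0 := fun f hf =>
    (cylExt_pos hpos γ (mem_extSet_iff.mp hf)).ne'
  have hsum : (∑ f ∈ extSet γ, (((c f / cγ : ℝ) : ℂ)) • (g e - g f))
      = g e - ((cγ : ℂ))⁻¹ • chi M γ := by
    simp only [smul_sub]
    rw [Finset.sum_sub_distrib]
    congr 1
    · rw [← Finset.sum_smul]
      have h1 : (∑ f ∈ extSet γ, (((c f / cγ : ℝ) : ℂ))) = 1 := by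
        norm_cast
        rw [← Finset.sum_div, ← measure_cyl_eq_sum γ, div_self hcγ0]
      rw [h1, one_smul]
    · rw [chi_eq_sum_chiE γ, Finset.smul_sum]
      apply Finset.sum_congr rfl
      intro f hf
      simp only [hgdef]
      rw [smul_smul]
      congr 1
      have : ((c f : ℝ) : ℂ) ≠ 0 := by exact_mod_cast hcf0 f hf
      push_cast
      field_simp
  have hmem : g e - ((cγ : ℂ))⁻¹ • chi M γ ∈ S := by
    rw [← hsum]
    apply Submodule.sum_mem
    intro f hf
    apply Submodule.smul_mem
    by_cases hef : e = f
    · subst hef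
      rw [sub_self]
      exact Submodule.zero_mem S
    · apply hS γ
      apply Submodule.subset_span
      exact ⟨e, f, hef, he, mem_extSet_iff.mp hf, rfl⟩
  have hce : ((c e : ℝ) : ℂ) ≠ 0 := by
    exact_mod_cast (cylExt_pos hpos γ he).ne'
  have hrep : chiE M γ e
      = ((c e : ℂ)) • (g e - ((cγ : ℂ))⁻¹ • chi M γ)
        + ((c e : ℂ)) • (((cγ : ℂ))⁻¹ • chi M γ) := by
    rw [smul_sub, sub_add_cancel]
    simp only [hgdef]
    rw [smul_smul, mul_inv_cancel₀ hce, one_smul]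
  beta_reduce
  rw [hchi, hrep]
  apply Submodule.add_mem
  · exact Submodule.mem_sup_right (Submodule.smul_mem _ _ hmem)
  · refine Submodule.mem_sup_left ?_
    exact Submodule.smul_mem _ _ (Submodule.smul_mem _ _ (Submodule.subset_span ⟨γ, rfl⟩))




lemma part1_orth (hpos : CylPos M) :
    ∀ f ∈ Eneg M, ∀ g ∈ Ezero M, (inner ℂ f g : ℂ) = 0 := by
  intro f hf g hg
  rw [Eneg, Submodule.mem_span_singleton] at hf
  obtain ⟨a, rfl⟩ := hf
  rw [inner_smul_left]
  suffices h : (inner ℂ (oneL2 M) g : ℂ) = 0 by rw [h, mul_zero]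
  have hv : ∀ v : Fin N, (inner ℂ (oneL2 M) (chi M (vertexPath (A := A) v)) : ℂ)
      = ((M (Cyl (vertexPath (A := A) v))).toReal : ℂ) := by
    intro v
    rw [oneL2, chi, inner_indic_indic, Set.inter_univ]
  induction hg using Submodule.span_induction with
  | mem u hu =>
      obtain ⟨v, v', hne, rfl⟩ := hu
      rw [inner_sub_right, inner_smul_right, inner_smul_right, hv v, hv v',
        inv_mul_cancel₀ (by exact_mod_cast (hpos 0 (vertexPath v)).ne'),
        inv_mul_cancel₀ (by exact_mod_cast (hpos 0 (vertexPath v')).ne'), sub_self]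
  | zero => exact inner_zero_right _
  | add u w _ _ hu hw => rw [inner_add_right, hu, hw, add_zero]
  | smul b u _ hu => rw [inner_smul_right, hu, mul_zero]

lemma le_vt0 : Eneg M ⊔ Ezero M ≤ Vt M 0 := by
  apply sup_le
  · rw [Eneg, Submodule.span_le, Set.singleton_subset_iff]
    rw [SetLike.mem_coe, oneL2_eq_sum]
    exact Submodule.sum_mem _ (fun v _ => Submodule.subset_span ⟨vertexPath v, rfl⟩)
  · rw [Ezero, Submodule.span_le]
    rintro f ⟨v, v', hne, rfl⟩
    exact sub_mem (Submodule.smul_mem _ _ (Submodule.subset_span ⟨vertexPath v, rfl⟩))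
      (Submodule.smul_mem _ _ (Submodule.subset_span ⟨vertexPath v', rfl⟩))

lemma vt0_le (hpos : CylPos M) [MeasureTheory.IsProbabilityMeasure M] :
    Vt M 0 ≤ Eneg M ⊔ Ezero M := by
  rw [Vt, Submodule.span_le]
  rintro ff ⟨lam, rfl⟩
  beta_reduce
  rw [finPath_zero_eq lam]
  set v := lam.vtx 0 with hvdef
  set c : Fin N → ℝ := fun u => (M (Cyl (vertexPath (A := A) u))).toReal with hcdef
  set g : Fin N → Lp ℂ 2 M := fun u => ((c u : ℂ))⁻¹ • chi M (vertexPath u) with hgdef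
  have hc0 : ∀ u, c u ≠ 0 := fun u => (hpos 0 (vertexPath u)).ne'
  have hsum : (∑ u : Fin N, ((c u : ℂ)) • (g v - g u)) = g v - oneL2 M := by
    simp only [smul_sub]
    rw [Finset.sum_sub_distrib]
    congr 1
    · rw [← Finset.sum_smul]
      have h1 : (∑ u : Fin N, ((c u : ℝ) : ℂ)) = 1 := by
        norm_cast
        simp only [hcdef]
        exact measure_univ_eq_sum.symm
      rw [h1, one_smul]
    · rw [oneL2_eq_sum]
      apply Finset.sum_congr rfl
      intro u _
      simp only [hgdef]
      rw [smul_smul, mul_inv_cancel₀ (by exact_mod_cast hc0 u), one_smul]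
  have hmem : g v - oneL2 M ∈ Ezero M := by
    rw [← hsum]
    apply Submodule.sum_mem
    intro u _
    apply Submodule.smul_mem
    by_cases hvu : v = u
    · subst hvu
      rw [sub_self]
      exact Submodule.zero_mem _
    · exact Submodule.subset_span ⟨v, u, hvu, rfl⟩
  have hrep : chi M (vertexPath (A := A) v)
      = ((c v : ℂ)) • (g v - oneL2 M) + ((c v : ℂ)) • oneL2 M := by
    rw [smul_sub, sub_add_cancel]
    simp only [hgdef]
    rw [smul_smul, mul_inv_cancel₀ (by exact_mod_cast hc0 v), one_smul]
  rw [hrep]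
  apply Submodule.add_mem
  · exact Submodule.mem_sup_right (Submodule.smul_mem _ _ hmem)
  · exact Submodule.mem_sup_left (Submodule.smul_mem _ _ (Submodule.subset_span rfl))

lemma succ_le_of_le_pred {m b : ℕ} (h1 : 1 ≤ b) (h : m ≤ b - 1) : m + 1 ≤ b := by omega

lemma pred_helper {a b j : ℕ} (h : a + (j + 1) ≤ b) : a + j ≤ b - 1 := by omega

lemma wn_eq (hpos : CylPos M) (n : ℕ) :
    Wn M n = ⨆ (γ : FB k N A) (_ : n * k ≤ γ.1 ∧ γ.1 ≤ (n + 1) * k - 1), Esub M γ.2 := by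
  have hk : 1 ≤ k := Nat.one_le_iff_ne_zero.mpr (NeZero.ne k)
  have hb1 : 1 ≤ (n + 1) * k := Nat.one_le_iff_ne_zero.mpr
    (Nat.mul_ne_zero (Nat.succ_ne_zero n) (NeZero.ne k))
  set S := ⨆ (γ : FB k N A) (_ : n * k ≤ γ.1 ∧ γ.1 ≤ (n + 1) * k - 1), Esub M γ.2 with hSdef
  have hSorth : S ≤ (Vt M (n * k))ᗮ := by
    refine iSup_le fun γ => iSup_le fun hcond => ?_
    exact esub_le_orth hpos hcond.1 γ.2
  have hSvt : S ≤ Vt M ((n + 1) * k) := by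
    refine iSup_le fun γ => iSup_le fun hcond => ?_
    exact (esub_le_vt γ.2).trans (vt_mono (succ_le_of_le_pred hb1 hcond.2))
  apply le_antisymm
  · -- Wn ≤ S
    have main : ∀ j, n * k + j ≤ (n + 1) * k → Vt M (n * k + j) ≤ Vt M (n * k) ⊔ S := by
      intro j
      induction j with
      | zero => intro _; exact le_sup_left
      | succ j ih =>
          intro hj
          have hS : ∀ γ : FinPath k N A (n * k + j), Esub M γ ≤ S := by
            intro γ
            exact le_iSup_of_le ⟨n * k + j, γ⟩
              (le_iSup_of_le ⟨Nat.le_add_right _ _, pred_helper hj⟩ le_rfl)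
          exact (vt_succ_le_sup hpos hS).trans
            (sup_le ((ih (le_trans (by omega) hj)).trans le_rfl) le_sup_right)
    have hmain : Vt M ((n + 1) * k) ≤ Vt M (n * k) ⊔ S := by
      have : (n + 1) * k = n * k + k := by ring
      rw [this]
      exact main k (le_of_eq this.symm)
    intro f hf
    rw [Wn, Submodule.mem_inf] at hf
    obtain ⟨hf1, hf2⟩ := hf
    obtain ⟨u, hu, s, hs, hus⟩ := Submodule.mem_sup.mp (hmain hf1)
    have hsorth : s ∈ (Vt M (n * k))ᗮ := hSorth hs
    have huorth : u ∈ (Vt M (n * k))ᗮ := by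
      have : u = f - s := by rw [← hus]; exact (add_sub_cancel_right u s).symm
      rw [this]
      exact sub_mem hf2 hsorth
    have hu0 : u = 0 := by
      have := (Submodule.mem_orthogonal _ u).mp huorth u hu
      exact inner_self_eq_zero.mp this
    rw [← hus, hu0, zero_add]
    exact hs
  · -- S ≤ Wn
    rw [Wn]
    exact le_inf hSvt hSorth


end KBratteli

namespace KBratteli

/-- In `L²(X_B, M)`: `𝒱₀ = E₋₁ ⊕ E₀` (an orthogonal direct sum),
and for every `n`, `𝒲_n` equals the linear span of the union of the eigenspaces
`E_γ` over the finite paths `γ` with `nk ≤ |γ| ≤ (n+1)k − 1`. -/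
theorem statement13 (k N : ℕ) [NeZero k] [NeZero N]
    (A : Fin k → Matrix (Fin N) (Fin N) ℕ)
    (hcomm : ∀ i j, A i * A j = A j * A i)
    (hirr : IrreducibleFamily A)
    (hrow : ∀ (i : Fin k) (a : Fin N), 2 ≤ ∑ b, A i a b)
    (hAirr : MatIrreducible ((List.ofFn A).prod))
    (ρ : Fin k → ℝ) (hρ : ∀ i, ρ i = specRad (A i))
    (x : Fin N → ℝ) (hxpos : ∀ v, 0 < x v) (hxsum : ∑ v, x v = 1)
    (hxeig : ∀ i, ((A i).map (Nat.cast : ℕ → ℝ)).mulVec x = ρ i • x)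
    (M : MeasureTheory.Measure (PathSpace k N A)) [MeasureTheory.IsProbabilityMeasure M]
    (hM : ∀ lam : FB k N A, M (Cyl lam.2) = ENNReal.ofReal (Mval ρ x lam)) :
    ((∀ f ∈ Eneg M, ∀ g ∈ Ezero M, (inner ℂ f g : ℂ) = 0) ∧
      Vt M 0 = Eneg M ⊔ Ezero M) ∧
    (∀ n : ℕ, Wn M n
        = ⨆ (γ : FB k N A) (_ : n * k ≤ γ.1 ∧ γ.1 ≤ (n + 1) * k - 1), Esub M γ.2) := by
  have hρpos : ∀ i, 0 < ρ i := rho_pos hrow hxpos hxeig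
  have hpos : CylPos M := cylPos_of_hM hρpos hxpos hM
  exact ⟨⟨part1_orth hpos, le_antisymm (vt0_le hpos) le_vt0⟩, fun n => wn_eq hpos n⟩

end KBratteli
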